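/- There exist constants C > 0 and c > 0 such that for all sufficiently large n the following holds for the modified SEMO and modified GSEMO: (i) maximizing OMM, for every choice of the initial individual x⁽⁰⁾ ∈ {0,1}ⁿ, and (ii) maximizing OJZJ_k for any integer k with 1 < k ≤ n/4, for every initial individual that is Pareto-optimal and distinct from 0ⁿ and 1ⁿ, with probability at least 1 − exp(−c√n), after at most C·n² iterations the population contains at least n/2 individuals. -/

import Mathlib

open scoped ENNReal

namespace GSEMOPaper

attribute [local instance] Classical.propDecidable

/-- An individual (bit string) of length `n`. -/
abbrev Individual (n : ℕ) := Fin n → Bool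

/-- `u` weakly dominates `v` (maximization, two objectives). -/
def weaklyDom (u v : ℝ × ℝ) : Prop := v.1 ≤ u.1 ∧ v.2 ≤ u.2

/-- `u` strictly dominates `v`. -/
def strictlyDom (u v : ℝ × ℝ) : Prop := weaklyDom u v ∧ u ≠ v

/-- The Pareto front of a bi-objective function on bit strings. -/
def paretoFront {n : ℕ} (f : Individual n → ℝ × ℝ) : Set (ℝ × ℝ) :=
  {u | ∃ x : Individual n, f x = u ∧ ∀ y : Individual n, ¬ strictlyDom (f y) (f x)}

/-- The objective values of the population `P` cover the Pareto front of `f`. -/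
def covers {n : ℕ} (f : Individual n → ℝ × ℝ) (P : Finset (Individual n)) : Prop :=
  paretoFront f ⊆ f '' (P : Set (Individual n))

/-- A valid (G)SEMO population: distinct members are mutually non-dominated
(in particular they have pairwise distinct objective values). -/
def validPop {n : ℕ} (f : Individual n → ℝ × ℝ) (P : Finset (Individual n)) : Prop :=
  ∀ x ∈ P, ∀ y ∈ P, x ≠ y → ¬ weaklyDom (f x) (f y)

/-- Survival selection of the (G)SEMO: remove all individuals weakly dominated by the
offspring `y`, then insert `y` unless it is strictly dominated by a remaining individual. -/
noncomputable def updatePop {n : ℕ} (f : Individual n → ℝ × ℝ)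
    (P : Finset (Individual n)) (y : Individual n) : Finset (Individual n) :=
  let Q := P.filter fun z => ¬ weaklyDom (f y) (f z)
  if ∃ z ∈ Q, strictlyDom (f z) (f y) then Q else insert y Q

/-- Flip position `i` of `x`. -/
def flipOne {n : ℕ} (x : Individual n) (i : Fin n) : Individual n :=
  Function.update x i (!x i)

/-- One-bit mutation (SEMO): flip exactly one uniformly random position. -/
noncomputable def oneBitMut {n : ℕ} (x : Individual n) : PMF (Individual n) :=
  if h : n = 0 then PMF.pure x
  else
    haveI : Nonempty (Fin n) := ⟨⟨0, Nat.pos_of_ne_zero h⟩⟩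
    (PMF.uniformOfFintype (Fin n)).map (flipOne x)

/-- A vector of `m` independent Bernoulli(`p`) bits. -/
noncomputable def bernoulliVec (p : ℝ≥0∞) (hp : p ≤ 1) : (m : ℕ) → PMF (Fin m → Bool)
  | 0 => PMF.pure fun i => i.elim0
  | m + 1 => (PMF.bernoulli p.toNNReal (by simpa using ENNReal.toNNReal_mono ENNReal.one_ne_top hp)).bind fun b => (bernoulliVec p hp m).map fun v => Fin.cons b v

/-- Standard bit mutation (GSEMO): flip each position independently with probability `1/n`. -/
noncomputable def stdBitMut {n : ℕ} (x : Individual n) : PMF (Individual n) :=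
  if h : n = 0 then PMF.pure x
  else
    (bernoulliVec ((n : ℝ≥0∞))⁻¹
        (ENNReal.inv_le_one.mpr (by exact_mod_cast Nat.one_le_iff_ne_zero.mpr h)) n).map
      fun mask => fun j => if mask j then !x j else x j

/-- One iteration of the (G)SEMO maximizing `f`, with mutation operator `mutOp`:
choose a parent uniformly at random from the population, mutate it, and perform
survival selection. -/
noncomputable def semoStep {n : ℕ} (f : Individual n → ℝ × ℝ)
    (mutOp : Individual n → PMF (Individual n))
    (P : Finset (Individual n)) : PMF (Finset (Individual n)) :=
  if h : P.Nonempty then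
    (PMF.uniformOfFinset P h).bind fun x => (mutOp x).map fun y => updatePop f P y
  else PMF.pure P

/-- One iteration of the modified (G)SEMO: choose `i ∈ {0, …, m}` uniformly at random;
if the population contains no individual `z` with `idx z = i`, nothing happens;
otherwise the (unique) such individual is the parent. -/
noncomputable def modStep {n : ℕ} (f : Individual n → ℝ × ℝ)
    (mutOp : Individual n → PMF (Individual n))
    (idx : Individual n → ℕ) (m : ℕ)
    (P : Finset (Individual n)) : PMF (Finset (Individual n)) :=
  (PMF.uniformOfFintype (Fin (m + 1))).bind fun i =>
    let S := P.filter fun z => idx z = (i : ℕ)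
    if h : S.Nonempty then
      (PMF.uniformOfFinset S h).bind fun x => (mutOp x).map fun y => updatePop f P y
    else PMF.pure P

/-- Distribution of the trajectory (list of states, most recent first) of `t` iterations of
the Markov chain with one-step kernel `step`, started in state `s`. The resulting lists
have length `t + 1` and record the states `P⁽ᵗ⁾, …, P⁽⁰⁾`. -/
noncomputable def run {σ : Type*} [Inhabited σ] (step : σ → PMF σ) (s : σ) : ℕ → PMF (List σ)
  | 0 => PMF.pure [s]
  | t + 1 => (run step s t).bind fun l => (step l.headI).map fun s' => s' :: l

/-- The probability that a sample from `p` lies in the event `E`. -/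
noncomputable def prob {α : Type*} (p : PMF α) (E : Set α) : ℝ≥0∞ := p.toOuterMeasure E

/-- The uniform distribution on `{0,1}ⁿ` used for initialization. -/
noncomputable def uniformInit (n : ℕ) : PMF (Individual n) :=
  PMF.uniformOfFintype (Individual n)

/-- The number of ones of a bit string. -/
def ones {n : ℕ} (x : Individual n) : ℕ :=
  (Finset.univ.filter fun i : Fin n => x i = true).card

/-- The number of zeros of a bit string. -/
def zeros {n : ℕ} (x : Individual n) : ℕ :=
  (Finset.univ.filter fun i : Fin n => x i = false).card

/-- `g₁ x`: the number of ones in the first half (positions `0, …, n/2 - 1`). -/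
def g1 {n : ℕ} (x : Individual n) : ℕ :=
  (Finset.univ.filter fun i : Fin n => (i : ℕ) < n / 2 ∧ x i = true).card

/-- `g₂ x`: the number of ones in the second half (positions `n/2, …, n - 1`). -/
def g2 {n : ℕ} (x : Individual n) : ℕ :=
  (Finset.univ.filter fun i : Fin n => n / 2 ≤ (i : ℕ) ∧ x i = true).card

/-- The COCZ benchmark: `COCZ(x) = (g₁(x) + g₂(x), g₁(x) + n/2 − g₂(x))`. -/
noncomputable def cocz {n : ℕ} (x : Individual n) : ℝ × ℝ :=
  (((g1 x + g2 x : ℕ) : ℝ), (g1 x : ℝ) + (n : ℝ) / 2 - (g2 x : ℝ))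

/-- The OneMinMax benchmark: `OMM(x) = (|x|₁, n − |x|₁)`. -/
noncomputable def omm {n : ℕ} (x : Individual n) : ℝ × ℝ :=
  ((ones x : ℝ), (n : ℝ) - (ones x : ℝ))

/-- The OJZJ benchmark with gap parameter `k`. -/
noncomputable def ojzj (n k : ℕ) (x : Individual n) : ℝ × ℝ :=
  ((if ones x ≤ n - k ∨ x = fun _ => true then ((k + ones x : ℕ) : ℝ)
      else ((n - ones x : ℕ) : ℝ)),
   (if zeros x ≤ n - k ∨ x = fun _ => false then ((k + zeros x : ℕ) : ℝ)
      else ((n - zeros x : ℕ) : ℝ)))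


section ProbTools

variable {α : Type*} {β : Type*}

lemma prob_mono (p : PMF α) {E F : Set α} (h : E ⊆ F) : prob p E ≤ prob p F :=
  p.toOuterMeasure.mono h

lemma prob_le_one (p : PMF α) (E : Set α) : prob p E ≤ 1 := by
  rw [prob, PMF.toOuterMeasure_apply, ← PMF.tsum_coe p]
  exact ENNReal.tsum_le_tsum fun x => Set.indicator_le_self E p x

lemma prob_bind (p : PMF α) (f : α → PMF β) (E : Set β) :
    prob (p.bind f) E = ∑' a, p a * prob (f a) E :=
  PMF.toOuterMeasure_bind_apply p f E

lemma prob_map (p : PMF α) (g : α → β) (E : Set β) :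
    prob (p.map g) E = prob p (g ⁻¹' E) :=
  PMF.toOuterMeasure_map_apply g p E

lemma prob_pure (a : α) (E : Set α) : prob (PMF.pure a) E = if a ∈ E then 1 else 0 :=
  PMF.toOuterMeasure_pure_apply a E

lemma prob_ne_top (p : PMF α) (E : Set α) : prob p E ≠ ⊤ :=
  (lt_of_le_of_lt (prob_le_one p E) ENNReal.one_lt_top).ne

lemma prob_add_compl (p : PMF α) (E : Set α) : prob p E + prob p Eᶜ = 1 := by
  classical
  rw [prob, prob, PMF.toOuterMeasure_apply, PMF.toOuterMeasure_apply, ← ENNReal.tsum_add,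
    ← PMF.tsum_coe p]
  refine tsum_congr fun x => ?_
  by_cases hx : x ∈ E <;> simp [Set.indicator, hx]

lemma prob_eq_one_sub_compl (p : PMF α) (E : Set α) : prob p E = 1 - prob p Eᶜ :=
  ENNReal.eq_sub_of_add_eq (prob_ne_top p Eᶜ) (prob_add_compl p E)

lemma prob_eq_zero_of (p : PMF α) (E : Set α) (h : ∀ a ∈ E, p a = 0) : prob p E = 0 := by
  classical
  rw [prob, PMF.toOuterMeasure_apply]
  refine ENNReal.tsum_eq_zero.mpr fun x => ?_
  by_cases hx : x ∈ E
  · simp [Set.indicator, hx, h x hx]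
  · simp [Set.indicator, hx]

lemma pmf_bind_congr (p : PMF α) (f g : α → PMF β) (h : ∀ a ∈ p.support, f a = g a) :
    p.bind f = p.bind g := by
  ext b
  rw [PMF.bind_apply, PMF.bind_apply]
  refine tsum_congr fun a => ?_
  by_cases ha : p a = 0
  · simp [ha]
  · rw [h a (by simpa [PMF.mem_support_iff] using ha)]

end ProbTools

section OnesLemmas

variable {n : ℕ}

lemma ones_le (x : Individual n) : ones x ≤ n :=
  le_trans (Finset.card_filter_le _ _) (by simp)

lemma ones_add_zeros (x : Individual n) : ones x + zeros x = n := by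
  classical
  rw [ones, zeros]
  rw [show (Finset.univ.filter fun i : Fin n => x i = false) =
      (Finset.univ.filter fun i : Fin n => ¬ (x i = true)) from
    Finset.filter_congr fun i _ => by cases h : x i <;> simp [h]]
  rw [Finset.card_filter_add_card_filter_not]
  simp

lemma zeros_eq (x : Individual n) : zeros x = n - ones x := by
  have := ones_add_zeros x; omega

lemma filter_flipOne (x : Individual n) (i : Fin n) :
    (Finset.univ.filter fun j => flipOne x i j = true) =
      if x i = true then (Finset.univ.filter fun j => x j = true).erase i
      else insert i (Finset.univ.filter fun j => x j = true) := by
  classical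
  ext j
  by_cases hj : j = i
  · subst hj
    cases h : x j <;> simp [flipOne, h, Finset.mem_erase]
  · cases h : x i <;>
      simp [flipOne, Function.update_of_ne hj, h, hj, Finset.mem_erase]

lemma ones_flipOne_false (x : Individual n) (i : Fin n) (h : x i = false) :
    ones (flipOne x i) = ones x + 1 := by
  classical
  rw [ones, filter_flipOne, if_neg (by simp [h]), Finset.card_insert_of_notMem (by simp [h])]
  rfl

lemma ones_flipOne_true (x : Individual n) (i : Fin n) (h : x i = true) :
    ones (flipOne x i) + 1 = ones x := by
  classical
  rw [ones, filter_flipOne, if_pos h]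
  exact Finset.card_erase_add_one (by simp [h])

lemma ones_allTrue : ones (fun _ : Fin n => true) = n := by simp [ones]

lemma ones_allFalse : ones (fun _ : Fin n => false) = 0 := by simp [ones]

lemma eq_allTrue_of_ones (x : Individual n) (h : ones x = n) : x = fun _ => true := by
  classical
  have : (Finset.univ.filter fun i : Fin n => x i = true) = Finset.univ :=
    Finset.eq_univ_of_card _ (by simpa [ones] using h)
  funext i
  have := Finset.mem_filter.mp (this ▸ Finset.mem_univ i)
  exact this.2

lemma eq_allFalse_of_ones (x : Individual n) (h : ones x = 0) : x = fun _ => false := by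
  classical
  have h0 : (Finset.univ.filter fun i : Fin n => x i = true) = ∅ :=
    Finset.card_eq_zero.mp (by simpa [ones] using h)
  funext i
  cases hx : x i
  · rfl
  · exact absurd (h0 ▸ Finset.mem_filter.mpr ⟨Finset.mem_univ i, hx⟩) (by simp)

end OnesLemmas
section MutBounds

variable {n : ℕ}

lemma prob_ge_sum {α : Type*} (p : PMF α) (E : Set α) (s : Finset α)
    (hs : ∀ a ∈ s, a ∈ E) : ∑ a ∈ s, p a ≤ prob p E := by
  rw [prob, PMF.toOuterMeasure_apply]
  refine le_trans (le_of_eq (Finset.sum_congr rfl fun a ha =>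
    (Set.indicator_of_mem (hs a ha) p).symm)) ?_
  exact ENNReal.sum_le_tsum s

lemma bernoulliVec_apply (p : ℝ≥0∞) (hp : p ≤ 1) :
    ∀ (m : ℕ) (v : Fin m → Bool),
      bernoulliVec p hp m v = ∏ i, (if v i then p else 1 - p)
  | 0, v => by
      have hv : v = fun i => i.elim0 := funext fun i => i.elim0
      simp [bernoulliVec, PMF.pure_apply, hv]
  | m + 1, v => by
      rw [bernoulliVec, PMF.bind_apply]
      have key : ∀ b, (PMF.map (Fin.cons b) (bernoulliVec p hp m)) v
          = if b = v 0 then bernoulliVec p hp m (Fin.tail v) else 0 := by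
        intro b
        rw [PMF.map_apply]
        by_cases hb : b = v 0
        · subst hb
          rw [if_pos rfl, tsum_eq_single (Fin.tail v)]
          · rw [if_pos (Fin.cons_self_tail v).symm]
          · intro w hw
            rw [if_neg]
            intro hv
            exact hw (by rw [hv]; simp)
        · rw [if_neg hb]
          refine ENNReal.tsum_eq_zero.mpr fun w => ?_
          rw [if_neg]
          intro hv
          exact hb (by rw [hv]; simp)
      simp only [key]
      rw [tsum_bool]
      rw [bernoulliVec_apply p hp m (Fin.tail v), Fin.prod_univ_succ]
      generalize_proofs hpr
      cases hv0 : v 0 <;>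
        simp [PMF.bernoulli_apply, hv0, Fin.tail, ENNReal.coe_toNNReal (ne_top_of_le_ne_top ENNReal.one_ne_top hp)] <;>
        rfl

lemma flipOne_injective (x : Individual n) : Function.Injective (flipOne x) := by
  intro i j h
  by_contra hij
  have h1 := congrFun h i
  rw [show flipOne x i i = !x i from Function.update_self _ _ _,
    show flipOne x j i = x i from Function.update_of_ne hij _ _] at h1
  simp at h1

lemma oneBitMut_apply_ge (hn : n ≠ 0) (x : Individual n) (i : Fin n) :
    (n : ℝ≥0∞)⁻¹ ≤ oneBitMut x (flipOne x i) := by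
  rw [oneBitMut, dif_neg hn]
  haveI : Nonempty (Fin n) := ⟨⟨0, Nat.pos_of_ne_zero hn⟩⟩
  rw [PMF.map_apply]
  refine le_trans ?_ (ENNReal.le_tsum i)
  rw [if_pos rfl, PMF.uniformOfFintype_apply]
  simp

lemma aux_real_pow (hn : 2 ≤ n) : (4 : ℝ)⁻¹ ≤ (1 - (n : ℝ)⁻¹) ^ (n - 1) := by
  obtain ⟨m, rfl⟩ : ∃ m : ℕ, n = m + 1 := ⟨n - 1, by omega⟩
  have hm : 1 ≤ m := by omega
  have hm0 : (0 : ℝ) < m := by positivity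
  have h1 : (1 + 1/(m:ℝ)) ≤ Real.exp (1/m) := by
    have := Real.add_one_le_exp (1/(m:ℝ)); linarith
  have h2 : (1 + 1/(m:ℝ)) ^ m ≤ Real.exp (1/m) ^ m :=
    pow_le_pow_left₀ (by positivity) h1 m
  have h3 : Real.exp (1/(m:ℝ)) ^ m = Real.exp 1 := by
    rw [← Real.exp_nat_mul]
    congr 1
    field_simp
  have h4 : (1 + 1/(m:ℝ)) ^ m ≤ 4 := by
    rw [h3] at h2
    have := Real.exp_one_lt_d9
    linarith
  have h5 : (1 - ((m:ℝ)+1)⁻¹) = ((1 + 1/(m:ℝ)))⁻¹ := by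
    field_simp
    ring
  have h6 : (0:ℝ) < (1 + 1/(m:ℝ)) ^ m := by positivity
  rw [show (m + 1 - 1 : ℕ) = m from rfl]
  push_cast
  rw [h5, inv_pow]
  exact inv_anti₀ h6 h4

lemma one_sub_inv_pow_ge (hn : 2 ≤ n) :
    (4 : ℝ≥0∞)⁻¹ ≤ (1 - (n : ℝ≥0∞)⁻¹) ^ (n - 1) := by
  have hn0 : (0:ℝ) < n := by positivity
  have e1 : (n : ℝ≥0∞)⁻¹ = ENNReal.ofReal ((n:ℝ)⁻¹) := by
    rw [ENNReal.ofReal_inv_of_pos hn0, ENNReal.ofReal_natCast]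
  have e2 : (1 : ℝ≥0∞) - ENNReal.ofReal ((n:ℝ)⁻¹) = ENNReal.ofReal (1 - (n:ℝ)⁻¹) := by
    rw [← ENNReal.ofReal_one, ← ENNReal.ofReal_sub _ (by positivity)]
  have e3 : (4 : ℝ≥0∞)⁻¹ = ENNReal.ofReal ((4:ℝ)⁻¹) := by
    rw [ENNReal.ofReal_inv_of_pos (by norm_num)]
    norm_num
  rw [e1, e2, e3, ← ENNReal.ofReal_pow (by
    have : (n:ℝ)⁻¹ ≤ 1 := by
      rw [inv_le_one_iff₀]; right; exact_mod_cast Nat.one_le_iff_ne_zero.mpr (by omega)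
    linarith)]
  exact ENNReal.ofReal_le_ofReal (aux_real_pow hn)

lemma stdBitMut_apply_ge (hn : 2 ≤ n) (x : Individual n) (i : Fin n) :
    (n : ℝ≥0∞)⁻¹ * (4:ℝ≥0∞)⁻¹ ≤ stdBitMut x (flipOne x i) := by
  have hn0 : n ≠ 0 := by omega
  rw [stdBitMut, dif_neg hn0, PMF.map_apply]
  set mask₀ : Fin n → Bool := fun j => decide (j = i) with hmask
  have hg : flipOne x i = fun j => if mask₀ j then !x j else x j := by
    funext j
    by_cases hj : j = i
    · subst hj; simp [flipOne, mask₀]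
    · simp [flipOne, mask₀, hj, Function.update_of_ne hj]
  refine le_trans ?_ (ENNReal.le_tsum mask₀)
  rw [if_pos hg, bernoulliVec_apply]
  rw [← Finset.mul_prod_erase Finset.univ _ (Finset.mem_univ i)]
  have h1 : (if mask₀ i then (n:ℝ≥0∞)⁻¹ else 1 - (n:ℝ≥0∞)⁻¹) = (n:ℝ≥0∞)⁻¹ := by
    simp [mask₀]
  rw [h1]
  refine mul_le_mul_right ?_ _
  have h2 : ∏ j ∈ Finset.univ.erase i, (if mask₀ j then (n:ℝ≥0∞)⁻¹ else 1 - (n:ℝ≥0∞)⁻¹)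
      = (1 - (n:ℝ≥0∞)⁻¹) ^ (n - 1) := by
    rw [Finset.prod_congr rfl (fun j hj => if_neg (by
      simp only [mask₀, decide_eq_true_eq]
      exact (Finset.mem_erase.mp hj).1))]
    rw [Finset.prod_const, Finset.card_erase_of_mem (Finset.mem_univ i)]
    simp
  rw [h2]
  exact one_sub_inv_pow_ge hn

lemma mut_prob_ge (hn16 : 16 ≤ n) (mutOp : Individual n → PMF (Individual n))
    (hmut : mutOp = oneBitMut ∨ mutOp = stdBitMut)
    (x : Individual n) (B : Finset (Fin n)) (hB : n ≤ 8 * B.card)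
    (E : Set (Individual n)) (hE : ∀ i ∈ B, flipOne x i ∈ E) :
    (32 : ℝ≥0∞)⁻¹ ≤ prob (mutOp x) E := by
  have hn0 : n ≠ 0 := by omega
  have hmass : ∀ i ∈ B, (n : ℝ≥0∞)⁻¹ * (4:ℝ≥0∞)⁻¹ ≤ mutOp x (flipOne x i) := by
    intro i _
    rcases hmut with h | h <;> subst h
    · refine le_trans ?_ (oneBitMut_apply_ge hn0 x i)
      refine mul_le_of_le_one_right zero_le ?_
      exact ENNReal.inv_le_one.mpr (by norm_num)
    · exact stdBitMut_apply_ge (by omega) x i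
  have hsum : ∑ y ∈ B.image (flipOne x), mutOp x y ≤ prob (mutOp x) E := by
    refine prob_ge_sum _ _ _ fun y hy => ?_
    obtain ⟨i, hi, rfl⟩ := Finset.mem_image.mp hy
    exact hE i hi
  rw [Finset.sum_image (fun a _ b _ h => flipOne_injective x h)] at hsum
  refine le_trans ?_ (le_trans (Finset.sum_le_sum hmass) hsum)
  rw [Finset.sum_const, nsmul_eq_mul]
  have hcard0 : (B.card : ℝ≥0∞) ≠ 0 := by
    simp only [ne_eq, Nat.cast_eq_zero]
    omega
  have hcardtop : (B.card : ℝ≥0∞) ≠ ⊤ := ENNReal.natCast_ne_top _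
  have hle : (n : ℝ≥0∞) * (4:ℝ≥0∞) ≤ (B.card : ℝ≥0∞) * 32 := by
    have h : n * 4 ≤ B.card * 32 := by omega
    calc (n : ℝ≥0∞) * 4 = ((n * 4 : ℕ) : ℝ≥0∞) := by push_cast; ring
      _ ≤ ((B.card * 32 : ℕ) : ℝ≥0∞) := by exact_mod_cast h
      _ = (B.card : ℝ≥0∞) * 32 := by push_cast; ring
  calc (32 : ℝ≥0∞)⁻¹ = (B.card : ℝ≥0∞) * ((B.card : ℝ≥0∞) * 32)⁻¹ := by
        rw [ENNReal.mul_inv (Or.inl hcard0) (Or.inl hcardtop), ← mul_assoc,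
          ENNReal.mul_inv_cancel hcard0 hcardtop, one_mul]
    _ ≤ (B.card : ℝ≥0∞) * ((n : ℝ≥0∞) * 4)⁻¹ := by
        exact mul_le_mul_right (ENNReal.inv_le_inv.mpr hle) _
    _ = (B.card : ℝ≥0∞) * ((n:ℝ≥0∞)⁻¹ * (4:ℝ≥0∞)⁻¹) := by
        rw [ENNReal.mul_inv (Or.inl (by exact_mod_cast hn0)) (Or.inl (ENNReal.natCast_ne_top n))]

end MutBounds
section Framework

/-- Feasible `ones`-values. -/
def GFeas (n k : ℕ) : Finset ℕ := insert 0 (insert n (Finset.Icc k (n - k)))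

lemma mem_GFeas {n k v : ℕ} : v ∈ GFeas n k ↔ v = 0 ∨ v = n ∨ (k ≤ v ∧ v ≤ n - k) := by
  simp [GFeas, Finset.mem_Icc]

lemma GFeas_le {n k v : ℕ} (hk : k ≤ n) (h : v ∈ GFeas n k) : v ≤ n := by
  rcases mem_GFeas.mp h with h | h | h <;> omega

/-- Invariant for populations. -/
def GInv (n k : ℕ) (P : Finset (Individual n)) : Prop :=
  (∀ x ∈ P, ∀ y ∈ P, ones x = ones y → x = y) ∧
  (∀ x ∈ P, ones x ∈ GFeas n k) ∧
  (∃ x ∈ P, ones x ∈ Finset.Icc k (n - k))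

lemma GInv.card_eq_image {n k : ℕ} {P : Finset (Individual n)} (hP : GInv n k P) :
    P.card = (P.image ones).card :=
  (Finset.card_image_of_injOn fun x hx y hy h => hP.1 x hx y hy h).symm

lemma updatePop_eq {n : ℕ} (f : Individual n → ℝ × ℝ) (P : Finset (Individual n))
    (y : Individual n) :
    updatePop f P y =
      if ∃ z ∈ P.filter fun z => ¬ weaklyDom (f y) (f z), strictlyDom (f z) (f y)
      then P.filter fun z => ¬ weaklyDom (f y) (f z)
      else insert y (P.filter fun z => ¬ weaklyDom (f y) (f z)) := rfl

lemma update_invariant {n k : ℕ} (hk : k ≤ n) (val : ℕ → ℝ × ℝ)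
    (f : Individual n → ℝ × ℝ) (hf : ∀ x, f x = val (ones x))
    (hval1 : ∀ a ∈ GFeas n k, ∀ b ∈ GFeas n k, (weaklyDom (val b) (val a) ↔ a = b))
    (hval2 : ∀ b ≤ n, b ∉ GFeas n k → ∀ a ∈ GFeas n k, ¬ weaklyDom (val b) (val a))
    (hval3 : ∀ b ≤ n, b ∉ GFeas n k → ∀ a ∈ Finset.Icc k (n - k), strictlyDom (val a) (val b))
    (P : Finset (Individual n)) (hP : GInv n k P) (y : Individual n) :
    GInv n k (updatePop f P y) ∧ P.image ones ⊆ (updatePop f P y).image ones ∧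
      (ones y ∈ GFeas n k → (updatePop f P y).image ones = insert (ones y) (P.image ones)) := by
  classical
  obtain ⟨hinj, hfeas, w, hwP, hw⟩ := hP
  by_cases hy : ones y ∈ GFeas n k
  · -- feasible offspring
    have hQ : (P.filter fun z => ¬ weaklyDom (f y) (f z)) =
        P.filter fun z => ¬ ones z = ones y := by
      refine Finset.filter_congr fun z hz => ?_
      rw [hf y, hf z]
      exact not_congr (hval1 _ (hfeas z hz) _ hy)
    have hno : ¬ ∃ z ∈ P.filter fun z => ¬ weaklyDom (f y) (f z), strictlyDom (f z) (f y) := by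
      rintro ⟨z, hzQ, hzd⟩
      rw [hQ] at hzQ
      obtain ⟨hzP, hzne⟩ := Finset.mem_filter.mp hzQ
      have hwd := hzd.1
      rw [hf, hf] at hwd
      exact hzne ((hval1 _ hy _ (hfeas z hzP)).mp hwd).symm
    have hupd : updatePop f P y = insert y (P.filter fun z => ¬ ones z = ones y) := by
      rw [updatePop_eq, if_neg hno, hQ]
    have himg : (updatePop f P y).image ones = insert (ones y) (P.image ones) := by
      rw [hupd, Finset.image_insert]
      ext v
      simp only [Finset.mem_insert, Finset.mem_image, Finset.mem_filter]
      constructor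
      · rintro (h | ⟨z, ⟨hzP, -⟩, rfl⟩)
        · exact Or.inl h
        · exact Or.inr ⟨z, hzP, rfl⟩
      · rintro (h | ⟨z, hzP, rfl⟩)
        · exact Or.inl h
        · by_cases hz : ones z = ones y
          · exact Or.inl hz
          · exact Or.inr ⟨z, ⟨hzP, hz⟩, rfl⟩
    refine ⟨⟨?_, ?_, ?_⟩, ?_, fun _ => himg⟩
    · -- injectivity
      rw [hupd]
      intro a ha b hb hab
      rcases Finset.mem_insert.mp ha with rfl | ha'
      · rcases Finset.mem_insert.mp hb with rfl | hb'
        · rfl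
        · exact absurd hab.symm (Finset.mem_filter.mp hb').2
      · rcases Finset.mem_insert.mp hb with rfl | hb'
        · exact absurd hab (Finset.mem_filter.mp ha').2
        · exact hinj a (Finset.mem_filter.mp ha').1 b (Finset.mem_filter.mp hb').1 hab
    · rw [hupd]
      intro x hx
      rcases Finset.mem_insert.mp hx with rfl | hx'
      · exact hy
      · exact hfeas x (Finset.mem_filter.mp hx').1
    · rw [hupd]
      by_cases hwy : ones w = ones y
      · exact ⟨y, Finset.mem_insert_self _ _, hwy ▸ hw⟩
      · exact ⟨w, Finset.mem_insert_of_mem (Finset.mem_filter.mpr ⟨hwP, hwy⟩), hw⟩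
    · rw [himg]
      exact Finset.subset_insert _ _
  · -- infeasible offspring : population unchanged
    have hyn : ones y ≤ n := ones_le y
    have hQ : (P.filter fun z => ¬ weaklyDom (f y) (f z)) = P := by
      refine Finset.filter_true_of_mem fun z hz => ?_
      rw [hf, hf]
      exact hval2 _ hyn hy _ (hfeas z hz)
    have hex : ∃ z ∈ P.filter fun z => ¬ weaklyDom (f y) (f z), strictlyDom (f z) (f y) := by
      refine ⟨w, hQ.symm ▸ hwP, ?_⟩
      rw [hf, hf]
      exact hval3 _ hyn hy _ hw
    have hupd : updatePop f P y = P := by rw [updatePop_eq, if_pos hex, hQ]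
    rw [hupd]
    exact ⟨⟨hinj, hfeas, w, hwP, hw⟩, Finset.Subset.refl _, fun h => absurd h hy⟩

lemma exists_target {n k : ℕ} (hn : 16 ≤ n) (hk : 4 * k ≤ n) (V : Finset ℕ)
    (hVF : ∀ v ∈ V, v ∈ GFeas n k) (hVw : ∃ w ∈ V, w ∈ Finset.Icc k (n - k))
    (hVc : 2 * V.card < n) :
    ∃ j ∈ V, ∃ t ∈ GFeas n k, t ∉ V ∧
      ((t = j + 1 ∧ n ≤ 8 * (n - j)) ∨ (t + 1 = j ∧ n ≤ 8 * j)) := by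
  classical
  set L := max k ((n + 7) / 8) with hL
  set U := min (n - k) (7 * n / 8) with hU
  have hLk : k ≤ L := le_max_left _ _
  have hL8 : (n + 7) / 8 ≤ L := le_max_right _ _
  have hLc : L = k ∨ L = (n + 7) / 8 := max_choice k ((n + 7) / 8)
  have hUnk : U ≤ n - k := min_le_left _ _
  have hU8 : U ≤ 7 * n / 8 := min_le_right _ _
  have hUc : U = n - k ∨ U = 7 * n / 8 := min_choice (n - k) (7 * n / 8)
  have hcard : V.card < (Finset.Icc L U).card := by
    rw [Nat.card_Icc]
    omega
  have hnsub : ¬ Finset.Icc L U ⊆ V := fun h => absurd (Finset.card_le_card h) (by omega)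
  obtain ⟨m, hmM, hmV⟩ := Finset.not_subset.mp hnsub
  obtain ⟨hLm, hmU⟩ := Finset.mem_Icc.mp hmM
  obtain ⟨w, hwV, hwIcc⟩ := hVw
  obtain ⟨hwk, hwnk⟩ := Finset.mem_Icc.mp hwIcc
  have hwm : w ≠ m := fun h => hmV (h ▸ hwV)
  rcases lt_or_gt_of_ne hwm with hlt | hgt
  · -- grow upwards from below m
    set S := V.filter (fun v => k ≤ v ∧ v < m) with hS
    have hSne : S.Nonempty := ⟨w, Finset.mem_filter.mpr ⟨hwV, hwk, hlt⟩⟩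
    set j := S.max' hSne with hj
    obtain ⟨hjV, hjk, hjm⟩ : j ∈ V ∧ k ≤ j ∧ j < m := by
      have := Finset.mem_filter.mp (S.max'_mem hSne)
      exact ⟨this.1, this.2.1, this.2.2⟩
    refine ⟨j, hjV, j + 1, ?_, ?_, Or.inl ⟨rfl, by omega⟩⟩
    · exact mem_GFeas.mpr (Or.inr (Or.inr ⟨by omega, by omega⟩))
    · intro hj1V
      have hne : j + 1 ≠ m := fun h => hmV (h ▸ hj1V)
      have : j + 1 ∈ S := Finset.mem_filter.mpr ⟨hj1V, by omega, by omega⟩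
      have := Finset.le_max' S _ this
      omega
  · -- grow downwards from above m
    set S := V.filter (fun v => m < v ∧ v ≤ n - k) with hS
    have hSne : S.Nonempty := ⟨w, Finset.mem_filter.mpr ⟨hwV, hgt, hwnk⟩⟩
    set j := S.min' hSne with hj
    obtain ⟨hjV, hjm, hjnk⟩ : j ∈ V ∧ m < j ∧ j ≤ n - k := by
      have := Finset.mem_filter.mp (S.min'_mem hSne)
      exact ⟨this.1, this.2.1, this.2.2⟩
    refine ⟨j, hjV, j - 1, ?_, ?_, Or.inr ⟨by omega, by omega⟩⟩
    · exact mem_GFeas.mpr (Or.inr (Or.inr ⟨by omega, by omega⟩))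
    · intro hj1V
      have hne : j - 1 ≠ m := fun h => hmV (h ▸ hj1V)
      have : j - 1 ∈ S := Finset.mem_filter.mpr ⟨hj1V, by omega, by omega⟩
      have := Finset.min'_le S _ this
      omega

end Framework
section StepLemmas

variable {n k : ℕ}

lemma modStep_support (hk : k ≤ n) (val : ℕ → ℝ × ℝ)
    (f : Individual n → ℝ × ℝ) (hf : ∀ x, f x = val (ones x))
    (hval1 : ∀ a ∈ GFeas n k, ∀ b ∈ GFeas n k, (weaklyDom (val b) (val a) ↔ a = b))
    (hval2 : ∀ b ≤ n, b ∉ GFeas n k → ∀ a ∈ GFeas n k, ¬ weaklyDom (val b) (val a))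
    (hval3 : ∀ b ≤ n, b ∉ GFeas n k → ∀ a ∈ Finset.Icc k (n - k), strictlyDom (val a) (val b))
    (mutOp : Individual n → PMF (Individual n))
    (P : Finset (Individual n)) (hP : GInv n k P) :
    ∀ P' ∈ (modStep f mutOp ones n P).support, GInv n k P' ∧ P.card ≤ P'.card := by
  classical
  intro P' hP'
  rw [modStep, PMF.support_bind] at hP'
  simp only [Set.mem_iUnion, exists_prop] at hP'
  obtain ⟨i, -, hP'⟩ := hP'
  have main : ∀ y : Individual n,
      GInv n k (updatePop f P y) ∧ P.card ≤ (updatePop f P y).card := by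
    intro y
    obtain ⟨hI, hsub, -⟩ := update_invariant hk val f hf hval1 hval2 hval3 P hP y
    refine ⟨hI, ?_⟩
    calc P.card = (P.image ones).card := hP.card_eq_image
      _ ≤ ((updatePop f P y).image ones).card := Finset.card_le_card hsub
      _ ≤ (updatePop f P y).card := Finset.card_image_le
  by_cases h : (P.filter fun z => ones z = (i : ℕ)).Nonempty
  · rw [dif_pos h, PMF.support_bind] at hP'
    simp only [Set.mem_iUnion, exists_prop] at hP'
    obtain ⟨x, -, hP'⟩ := hP'
    rw [PMF.support_map] at hP'
    obtain ⟨y, -, rfl⟩ := hP'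
    exact main y
  · rw [dif_neg h, PMF.support_pure] at hP'
    cases hP'
    exact ⟨hP, le_refl _⟩

lemma modStep_growth (hn : 16 ≤ n) (hk : 4 * k ≤ n) (val : ℕ → ℝ × ℝ)
    (f : Individual n → ℝ × ℝ) (hf : ∀ x, f x = val (ones x))
    (hval1 : ∀ a ∈ GFeas n k, ∀ b ∈ GFeas n k, (weaklyDom (val b) (val a) ↔ a = b))
    (hval2 : ∀ b ≤ n, b ∉ GFeas n k → ∀ a ∈ GFeas n k, ¬ weaklyDom (val b) (val a))
    (hval3 : ∀ b ≤ n, b ∉ GFeas n k → ∀ a ∈ Finset.Icc k (n - k), strictlyDom (val a) (val b))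
    (mutOp : Individual n → PMF (Individual n))
    (hmut : mutOp = oneBitMut ∨ mutOp = stdBitMut)
    (P : Finset (Individual n)) (hP : GInv n k P) (hcard : 2 * P.card < n) :
    (64 * n : ℝ≥0∞)⁻¹ ≤ prob (modStep f mutOp ones n P) {P' | P.card < P'.card} := by
  classical
  have hkn : k ≤ n := by omega
  obtain ⟨j, hjV, t, htF, htV, hdir⟩ := exists_target hn hk (P.image ones)
    (fun v hv => by obtain ⟨x, hx, rfl⟩ := Finset.mem_image.mp hv; exact hP.2.1 x hx)
    (by obtain ⟨x, hx, hxI⟩ := hP.2.2; exact ⟨ones x, Finset.mem_image_of_mem _ hx, hxI⟩)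
    (by rw [← hP.card_eq_image]; exact hcard)
  obtain ⟨x0, hx0P, hx0⟩ := Finset.mem_image.mp hjV
  have hjn : j ≤ n := GFeas_le hkn (hx0 ▸ hP.2.1 x0 hx0P)
  set E : Set (Finset (Individual n)) := {P' | P.card < P'.card} with hE
  have hgood : ∀ x, x ∈ P → ones x = j →
      (32:ℝ≥0∞)⁻¹ ≤ prob ((mutOp x).map fun y => updatePop f P y) E := by
    intro x hxP hxj
    rw [prob_map]
    have hupd : ∀ y : Individual n, ones y = t →
        y ∈ (fun y => updatePop f P y) ⁻¹' E := by
      intro y hy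
      obtain ⟨hI, -, himg⟩ := update_invariant hkn val f hf hval1 hval2 hval3 P hP y
      have himg' := himg (hy ▸ htF)
      show P.card < (updatePop f P y).card
      calc P.card = (P.image ones).card := hP.card_eq_image
        _ < ((updatePop f P y).image ones).card := by
            rw [himg', hy, Finset.card_insert_of_notMem htV]
            omega
        _ ≤ (updatePop f P y).card := Finset.card_image_le
    rcases hdir with ⟨hts, hrate⟩ | ⟨hts, hrate⟩
    · refine mut_prob_ge hn mutOp hmut x (Finset.univ.filter fun i => x i = false) ?_ _ ?_
      · have hz : (Finset.univ.filter fun i => x i = false).card = zeros x := rfl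
        have hoz := ones_add_zeros x
        rw [hz]
        omega
      · intro i hi
        refine hupd _ ?_
        rw [ones_flipOne_false x i (Finset.mem_filter.mp hi).2, hxj]
        omega
    · refine mut_prob_ge hn mutOp hmut x (Finset.univ.filter fun i => x i = true) ?_ _ ?_
      · have hz : (Finset.univ.filter fun i => x i = true).card = ones x := rfl
        rw [hz, hxj]
        omega
      · intro i hi
        refine hupd _ ?_
        have := ones_flipOne_true x i (Finset.mem_filter.mp hi).2
        omega
  set i0 : Fin (n + 1) := ⟨j, by omega⟩ with hi0
  have hS : (P.filter fun z => ones z = ((i0 : ℕ))).Nonempty :=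
    ⟨x0, Finset.mem_filter.mpr ⟨hx0P, hx0⟩⟩
  rw [modStep, prob_bind]
  refine le_trans ?_ (ENNReal.le_tsum i0)
  show (64 * n : ℝ≥0∞)⁻¹ ≤ (PMF.uniformOfFintype (Fin (n+1))) i0 *
    prob (if h : (P.filter fun z => ones z = ((i0 : ℕ))).Nonempty then
      (PMF.uniformOfFinset _ h).bind fun x => (mutOp x).map fun y => updatePop f P y
      else PMF.pure P) E
  rw [dif_pos hS, PMF.uniformOfFintype_apply, prob_bind]
  have h1 : ∀ x : Individual n,
      (PMF.uniformOfFinset _ hS) x * (32:ℝ≥0∞)⁻¹ ≤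
      (PMF.uniformOfFinset _ hS) x *
        prob ((mutOp x).map fun y => updatePop f P y) E := by
    intro x
    by_cases hx : x ∈ P.filter fun z => ones z = ((i0 : ℕ))
    · exact mul_le_mul_right
        (hgood x (Finset.mem_filter.mp hx).1 (Finset.mem_filter.mp hx).2) _
    · rw [PMF.uniformOfFinset_apply_of_notMem hS hx]
      simp
  have h2 : (32:ℝ≥0∞)⁻¹ = ∑' x : Individual n, (PMF.uniformOfFinset _ hS) x * (32:ℝ≥0∞)⁻¹ := by
    rw [ENNReal.tsum_mul_right, PMF.tsum_coe, one_mul]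
  have h3 : (Fintype.card (Fin (n+1)) : ℝ≥0∞)⁻¹ = ((n:ℝ≥0∞) + 1)⁻¹ := by
    simp
  rw [h3]
  have h4 : (32:ℝ≥0∞)⁻¹ ≤ ∑' x : Individual n, (PMF.uniformOfFinset _ hS) x *
      prob ((mutOp x).map fun y => updatePop f P y) E := by
    rw [h2]
    exact ENNReal.tsum_le_tsum h1
  refine le_trans ?_ (mul_le_mul_right h4 _)
  have hne0 : ((n:ℝ≥0∞) + 1) ≠ 0 := by simp
  have hnetop : ((n:ℝ≥0∞) + 1) ≠ ⊤ := by
    simp [ENNReal.add_ne_top]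
  rw [← ENNReal.mul_inv (Or.inl hne0) (Or.inl hnetop)]
  refine ENNReal.inv_le_inv.mpr ?_
  calc ((n:ℝ≥0∞) + 1) * 32 = ((n + 1) * 32 : ℕ) := by push_cast; ring
    _ ≤ ((64 * n : ℕ) : ℝ≥0∞) := by
        refine Nat.cast_le.mpr ?_
        omega
    _ = 64 * (n : ℝ≥0∞) := by push_cast; ring

end StepLemmas
section RunLemmas

lemma prob_apply {α : Type*} (p : PMF α) (E : Set α) :
    prob p E = ∑' a, E.indicator p a := PMF.toOuterMeasure_apply p E

variable {σ : Type*} [Inhabited σ]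

lemma run_support_ne_nil (step : σ → PMF σ) (s : σ) :
    ∀ t, ∀ l ∈ (run step s t).support, l ≠ [] := by
  intro t
  induction t with
  | zero =>
      intro l hl
      rw [run, PMF.support_pure] at hl
      cases hl
      simp
  | succ t ih =>
      intro l hl
      rw [run, PMF.support_bind] at hl
      simp only [Set.mem_iUnion, exists_prop] at hl
      obtain ⟨l', -, hl⟩ := hl
      rw [PMF.support_map] at hl
      obtain ⟨s', -, rfl⟩ := hl
      simp

lemma run_support_mem (step : σ → PMF σ) (s : σ) :
    ∀ t, ∀ l ∈ (run step s t).support, s ∈ l := by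
  intro t
  induction t with
  | zero =>
      intro l hl
      rw [run, PMF.support_pure] at hl
      cases hl
      simp
  | succ t ih =>
      intro l hl
      rw [run, PMF.support_bind] at hl
      simp only [Set.mem_iUnion, exists_prop] at hl
      obtain ⟨l', hl', hl⟩ := hl
      rw [PMF.support_map] at hl
      obtain ⟨s', -, rfl⟩ := hl
      exact List.mem_cons_of_mem _ (ih l' hl')

lemma run_succ_eq (step : σ → PMF σ) :
    ∀ (t : ℕ) (s : σ), run step s (t + 1) =
      (step s).bind fun s' => (run step s' t).map (· ++ [s]) := by
  intro t
  induction t with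
  | zero =>
      intro s
      rw [run, run, PMF.pure_bind]
      have h1 : ([s] : List σ).headI = s := rfl
      rw [h1]
      refine Eq.symm ?_
      refine (pmf_bind_congr _ _ (PMF.pure ∘ fun s' => s' :: [s]) fun s' _ => ?_).trans
        (PMF.bind_pure_comp _ _)
      rw [show run step s' 0 = PMF.pure [s'] from rfl, PMF.pure_map]
      rfl
  | succ t ih =>
      intro s
      rw [show run step s (t + 1 + 1) =
        (run step s (t + 1)).bind (fun l => (step l.headI).map (· :: l)) from rfl]
      rw [ih s, PMF.bind_bind]
      refine pmf_bind_congr _ _ _ fun s' _ => ?_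
      rw [show run step s' (t + 1) =
        (run step s' t).bind (fun l => (step l.headI).map (· :: l)) from rfl]
      rw [PMF.map_bind, PMF.bind_map]
      refine pmf_bind_congr _ _ _ fun l hl => ?_
      have hne := run_support_ne_nil step s' t l hl
      have hhead : (l ++ [s]).headI = l.headI := by
        cases l with
        | nil => exact absurd rfl hne
        | cons a l' => rfl
      show (step (l ++ [s]).headI).map (· :: (l ++ [s])) =
        ((step l.headI).map (· :: l)).map (· ++ [s])
      rw [hhead, PMF.map_comp]
      rfl

lemma run_tail_bound (step : σ → PMF σ) (Inv good : σ → Prop) (R : ℕ) (size : σ → ℕ)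
    (p : ℝ≥0∞)
    (hA1 : ∀ s, Inv s → ∀ s' ∈ (step s).support, Inv s' ∧ size s ≤ size s')
    (hA2 : ∀ s, Inv s → ¬ good s → p ≤ prob (step s) {s' | size s + 1 ≤ size s'})
    (hA3 : ∀ s, Inv s → R ≤ size s → good s) :
    ∀ t s, Inv s → prob (run step s t) {l | ∀ Q ∈ l, ¬ good Q} ≤
      2 ^ (R - size s) * (1 - p / 2) ^ t := by
  intro t
  induction t with
  | zero =>
      intro s hs
      rw [run, prob_pure]
      by_cases hg : ([s] : List σ) ∈ {l : List σ | ∀ Q ∈ l, ¬ good Q}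
      · rw [if_pos hg, pow_zero, mul_one]
        exact one_le_pow_of_one_le' (by norm_num : (1:ℝ≥0∞) ≤ 2) _
      · rw [if_neg hg]
        exact zero_le
  | succ t ih =>
      intro s hs
      by_cases hg : good s
      · rw [prob_eq_zero_of]
        · exact zero_le
        · intro l hl
          by_contra hne
          exact (hl s (run_support_mem step s (t+1) l
            ((PMF.mem_support_iff _ _).mpr hne))) hg
      · have hsize : size s < R := by
          by_contra h
          exact hg (hA3 s hs (by omega))
        rw [run_succ_eq, prob_bind]
        have hterm : ∀ s', step s s' *
            prob ((run step s' t).map (· ++ [s])) {l | ∀ Q ∈ l, ¬ good Q}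
            ≤ step s s' * ((if size s + 1 ≤ size s' then 2^(R - size s - 1)
                else 2^(R - size s)) * (1 - p/2)^t) := by
          intro s'
          by_cases hsup : s' ∈ (step s).support
          · obtain ⟨hI', hsz'⟩ := hA1 s hs s' hsup
            refine mul_le_mul_right ?_ _
            rw [prob_map]
            have hpre : (· ++ [s]) ⁻¹' {l : List σ | ∀ Q ∈ l, ¬ good Q} ⊆
                {l : List σ | ∀ Q ∈ l, ¬ good Q} := by
              intro l hl Q hQ
              exact hl Q (by simp [hQ])
            refine le_trans (prob_mono _ hpre) (le_trans (ih s' hI') ?_)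
            by_cases hinc : size s + 1 ≤ size s'
            · rw [if_pos hinc]
              exact mul_le_mul_left
                (pow_le_pow_right₀ (by norm_num : (1:ℝ≥0∞) ≤ 2) (by omega)) _
            · rw [if_neg hinc]
              exact mul_le_mul_left
                (pow_le_pow_right₀ (by norm_num : (1:ℝ≥0∞) ≤ 2) (by omega)) _
          · have h0 : step s s' = 0 := PMF.apply_eq_zero_iff _ _ |>.mpr hsup
            rw [h0, zero_mul, zero_mul]
        refine le_trans (ENNReal.tsum_le_tsum hterm) ?_
        have ha2 : p ≤ prob (step s) {s' | size s + 1 ≤ size s'} := hA2 s hs hg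
        have ha1 : prob (step s) {s' | size s + 1 ≤ size s'} ≤ 1 := prob_le_one _ _
        have hatop : prob (step s) {s' | size s + 1 ≤ size s'} ≠ ⊤ := prob_ne_top _ _
        have hb : prob (step s) {s' | size s + 1 ≤ size s'}ᶜ =
            1 - prob (step s) {s' | size s + 1 ≤ size s'} :=
          ENNReal.eq_sub_of_add_eq hatop
            (by rw [add_comm]; exact prob_add_compl _ _)
        have hsplit : (∑' s', step s s' * ((if size s + 1 ≤ size s' then 2^(R - size s - 1)
              else 2^(R - size s)) * (1 - p/2)^t))
            = 2^(R - size s - 1) * (1 - p/2)^t * prob (step s) {s' | size s + 1 ≤ size s'} +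
              2^(R - size s) * (1 - p/2)^t *
                prob (step s) {s' | size s + 1 ≤ size s'}ᶜ := by
          rw [prob_apply, prob_apply, ← ENNReal.tsum_mul_left, ← ENNReal.tsum_mul_left,
            ← ENNReal.tsum_add]
          refine tsum_congr fun s' => ?_
          by_cases hs' : size s + 1 ≤ size s'
          · rw [if_pos hs',
              Set.indicator_of_mem (show s' ∈ {s' | size s + 1 ≤ size s'} from hs'),
              Set.indicator_of_notMem
                (show s' ∉ {s' | size s + 1 ≤ size s'}ᶜ from fun h => h hs')]
            ring
          · rw [if_neg hs',
              Set.indicator_of_notMem (show s' ∉ {s' | size s + 1 ≤ size s'} from hs'),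
              Set.indicator_of_mem (show s' ∈ {s' | size s + 1 ≤ size s'}ᶜ from hs')]
            ring
        rw [hsplit, hb]
        have hd2 : (2:ℝ≥0∞)^(R - size s) = 2^(R - size s - 1) * 2 := by
          rw [← pow_succ]
          congr 1
          omega
        have e1 : (2:ℝ≥0∞)^(R - size s) * (1 - p/2)^t *
            (prob (step s) {s' | size s + 1 ≤ size s'} / 2)
            = 2^(R - size s - 1) * (1 - p/2)^t * prob (step s) {s' | size s + 1 ≤ size s'} := by
          rw [hd2]
          calc (2:ℝ≥0∞)^(R - size s - 1) * 2 * (1 - p/2)^t *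
              (prob (step s) {s' | size s + 1 ≤ size s'} / 2)
              = 2^(R - size s - 1) * (1 - p/2)^t *
                (2 * (prob (step s) {s' | size s + 1 ≤ size s'} / 2)) := by ring
            _ = _ := by
                rw [ENNReal.mul_div_cancel two_ne_zero ENNReal.ofNat_ne_top]
        have key : prob (step s) {s' | size s + 1 ≤ size s'} / 2 +
            (1 - prob (step s) {s' | size s + 1 ≤ size s'}) =
            1 - prob (step s) {s' | size s + 1 ≤ size s'} / 2 := by
          refine ENNReal.eq_sub_of_add_eq (ENNReal.div_lt_top hatop two_ne_zero).ne ?_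
          calc prob (step s) {s' | size s + 1 ≤ size s'} / 2 +
              (1 - prob (step s) {s' | size s + 1 ≤ size s'}) +
              prob (step s) {s' | size s + 1 ≤ size s'} / 2
              = (1 - prob (step s) {s' | size s + 1 ≤ size s'}) +
                (prob (step s) {s' | size s + 1 ≤ size s'} / 2 +
                  prob (step s) {s' | size s + 1 ≤ size s'} / 2) := by ring
            _ = (1 - prob (step s) {s' | size s + 1 ≤ size s'}) +
                prob (step s) {s' | size s + 1 ≤ size s'} := by rw [ENNReal.add_halves]
            _ = 1 := tsub_add_cancel_of_le ha1
        calc 2^(R - size s - 1) * (1 - p/2)^t * prob (step s) {s' | size s + 1 ≤ size s'} +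
            2^(R - size s) * (1 - p/2)^t *
              (1 - prob (step s) {s' | size s + 1 ≤ size s'})
            = 2^(R - size s) * (1 - p/2)^t *
              (prob (step s) {s' | size s + 1 ≤ size s'} / 2 +
                (1 - prob (step s) {s' | size s + 1 ≤ size s'})) := by
              rw [mul_add, e1]
          _ = 2^(R - size s) * (1 - p/2)^t *
              (1 - prob (step s) {s' | size s + 1 ≤ size s'} / 2) := by rw [key]
          _ ≤ 2^(R - size s) * (1 - p/2)^t * (1 - p/2) := by
              refine mul_le_mul_right (tsub_le_tsub_left ?_ 1) _
              rw [div_eq_mul_inv, div_eq_mul_inv]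
              exact mul_le_mul_left ha2 _
          _ = 2^(R - size s) * (1 - p/2)^(t+1) := by rw [pow_succ]; ring

lemma run_main_bound (step : σ → PMF σ) (Inv good : σ → Prop) (R : ℕ) (size : σ → ℕ)
    (p : ℝ≥0∞)
    (hA1 : ∀ s, Inv s → ∀ s' ∈ (step s).support, Inv s' ∧ size s ≤ size s')
    (hA2 : ∀ s, Inv s → ¬ good s → p ≤ prob (step s) {s' | size s + 1 ≤ size s'})
    (hA3 : ∀ s, Inv s → R ≤ size s → good s)
    (t : ℕ) (s : σ) (hs : Inv s) :
    1 - 2 ^ (R - size s) * (1 - p / 2) ^ t ≤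
      prob (run step s t) {l | ∃ Q ∈ l, good Q} := by
  have hcompl : {l : List σ | ∃ Q ∈ l, good Q}ᶜ = {l | ∀ Q ∈ l, ¬ good Q} := by
    ext l
    simp
  rw [prob_eq_one_sub_compl, hcompl]
  exact tsub_le_tsub_left (run_tail_bound step Inv good R size p hA1 hA2 hA3 t s hs) 1

end RunLemmas
section OMMInst

variable {n : ℕ}

def valOMM (n o : ℕ) : ℝ × ℝ := ((o : ℝ), (n : ℝ) - o)

lemma omm_eq_val (x : Individual n) : omm x = valOMM n (ones x) := rfl

lemma mem_GFeas_zero {v : ℕ} (hv : v ≤ n) : v ∈ GFeas n 0 :=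
  mem_GFeas.mpr (Or.inr (Or.inr ⟨Nat.zero_le _, by omega⟩))

lemma hval1_omm : ∀ a ∈ GFeas n 0, ∀ b ∈ GFeas n 0,
    (weaklyDom (valOMM n b) (valOMM n a) ↔ a = b) := by
  intro a ha b hb
  simp only [weaklyDom, valOMM]
  constructor
  · rintro ⟨h1, h2⟩
    have h1' : a ≤ b := by exact_mod_cast h1
    have h2' : (b:ℝ) ≤ a := by linarith
    have h2'' : b ≤ a := by exact_mod_cast h2'
    omega
  · rintro rfl
    exact ⟨le_refl _, le_refl _⟩

lemma hval2_omm : ∀ b ≤ n, b ∉ GFeas n 0 → ∀ a ∈ GFeas n 0,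
    ¬ weaklyDom (valOMM n b) (valOMM n a) :=
  fun b hb hbn => absurd (mem_GFeas_zero hb) hbn

lemma hval3_omm : ∀ b ≤ n, b ∉ GFeas n 0 → ∀ a ∈ Finset.Icc 0 (n - 0),
    strictlyDom (valOMM n a) (valOMM n b) :=
  fun b hb hbn => absurd (mem_GFeas_zero hb) hbn

end OMMInst

section OJZJInst

variable {n k : ℕ}

noncomputable def valOJZJ (n k o : ℕ) : ℝ × ℝ :=
  if o = 0 then ((k:ℝ), (k:ℝ) + n)
  else if o = n then ((k:ℝ) + n, (k:ℝ))
  else if o < k then ((k:ℝ) + o, (o:ℝ))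
  else if o ≤ n - k then ((k:ℝ) + o, (k:ℝ) + n - o)
  else ((n:ℝ) - o, (k:ℝ) + n - o)

lemma valOJZJ_zero : valOJZJ n k 0 = ((k:ℝ), (k:ℝ) + n) := if_pos rfl

lemma valOJZJ_top (hn : n ≠ 0) : valOJZJ n k n = ((k:ℝ) + n, (k:ℝ)) := by
  rw [valOJZJ, if_neg hn, if_pos rfl]

lemma valOJZJ_mid {a : ℕ} (hk : 0 < k) (hkn : k ≤ n) (ha1 : k ≤ a) (ha2 : a ≤ n - k) :
    valOJZJ n k a = ((k:ℝ) + a, (k:ℝ) + n - a) := by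
  rw [valOJZJ, if_neg (by omega), if_neg (by omega), if_neg (by omega), if_pos ha2]

lemma valOJZJ_low {b : ℕ} (hb0 : 0 < b) (hbk : b < k) (hkn : k ≤ n) :
    valOJZJ n k b = ((k:ℝ) + b, (b:ℝ)) := by
  rw [valOJZJ, if_neg (by omega), if_neg (by omega), if_pos hbk]

lemma valOJZJ_high {b : ℕ} (hk : 0 < k) (hkn : 2 * k ≤ n) (hb1 : n - k < b) (hb2 : b < n) :
    valOJZJ n k b = ((n:ℝ) - b, (k:ℝ) + n - b) := by
  rw [valOJZJ, if_neg (by omega), if_neg (by omega), if_neg (by omega), if_neg (by omega)]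

lemma ojzj_eq_val (hk2 : 2 ≤ k) (hk4 : 4 * k ≤ n) (x : Individual n) :
    ojzj n k x = valOJZJ n k (ones x) := by
  have hon := ones_le x
  have hz : zeros x = n - ones x := zeros_eq x
  have hn0 : n ≠ 0 := by omega
  have hxt : (x = fun _ => true) ↔ ones x = n :=
    ⟨fun h => by rw [h]; exact ones_allTrue, eq_allTrue_of_ones x⟩
  have hxf : (x = fun _ => false) ↔ ones x = 0 :=
    ⟨fun h => by rw [h]; exact ones_allFalse, eq_allFalse_of_ones x⟩
  rw [ojzj]
  by_cases h0 : ones x = 0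
  · rw [h0, valOJZJ_zero, if_pos (Or.inl (by omega : (0:ℕ) ≤ n - k)),
      if_pos (Or.inr (hxf.mpr h0))]
    rw [Prod.mk.injEq]
    constructor
    · norm_num
    · rw [hz, h0, Nat.sub_zero]
      push_cast
      ring
  · by_cases h1 : ones x = n
    · rw [h1, valOJZJ_top hn0, if_pos (Or.inr (hxt.mpr h1)),
        if_pos (Or.inl (by rw [hz, h1]; omega))]
      rw [Prod.mk.injEq]
      constructor
      · push_cast
        ring
      · rw [hz, h1]
        simp
    · by_cases h2 : ones x < k
      · rw [valOJZJ_low (by omega) h2 (by omega)]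
        rw [if_pos (Or.inl (by omega)),
          if_neg (by
            push_neg
            constructor
            · rw [hz]; omega
            · intro he; exact h0 (hxf.mp he))]
        rw [Prod.mk.injEq]
        constructor
        · push_cast
          ring
        · rw [hz, Nat.sub_sub_self hon]
      · by_cases h3 : ones x ≤ n - k
        · rw [valOJZJ_mid (by omega) (by omega) (by omega) h3]
          rw [if_pos (Or.inl h3), if_pos (Or.inl (by rw [hz]; omega))]
          rw [Prod.mk.injEq]
          constructor
          · push_cast
            ring
          · rw [hz]
            push_cast [Nat.cast_sub hon]
            ring
        · rw [valOJZJ_high (by omega) (by omega) (by omega) (by omega)]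
          rw [if_neg (by
              push_neg
              constructor
              · omega
              · intro he; exact h1 (hxt.mp he)),
            if_pos (Or.inl (by rw [hz]; omega))]
          rw [Prod.mk.injEq]
          constructor
          · push_cast [Nat.cast_sub hon]
            ring
          · rw [hz]
            push_cast [Nat.cast_sub hon]
            ring

end OJZJInst
section OJZJDom

variable {n k : ℕ}

lemma hval1_ojzj (hk2 : 2 ≤ k) (hk4 : 4 * k ≤ n) :
    ∀ a ∈ GFeas n k, ∀ b ∈ GFeas n k,
      (weaklyDom (valOJZJ n k b) (valOJZJ n k a) ↔ a = b) := by
  have hn0 : n ≠ 0 := by omega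
  have hnR : (0:ℝ) < n := by exact_mod_cast Nat.pos_of_ne_zero hn0
  have hkR : (2:ℝ) ≤ k := by exact_mod_cast hk2
  have hknR : 4 * (k:ℝ) ≤ n := by exact_mod_cast hk4
  intro a ha b hb
  rcases mem_GFeas.mp ha with ha' | ha' | ⟨hak, hank⟩
  · rcases mem_GFeas.mp hb with hb' | hb' | ⟨hbk, hbnk⟩
    · rw [ha', hb']
      simp [weaklyDom, valOJZJ_zero]
    · rw [ha', hb', valOJZJ_zero, valOJZJ_top hn0]
      unfold weaklyDom
      dsimp only
      constructor
      · rintro ⟨h1, h2⟩; exfalso; linarith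
      · intro h; exfalso; omega
    · have hbR : (k:ℝ) ≤ b := by exact_mod_cast hbk
      rw [ha', valOJZJ_zero, valOJZJ_mid (by omega) (by omega) hbk hbnk]
      unfold weaklyDom
      dsimp only
      constructor
      · rintro ⟨h1, h2⟩; exfalso; linarith
      · intro h; exfalso; omega
  · rcases mem_GFeas.mp hb with hb' | hb' | ⟨hbk, hbnk⟩
    · rw [ha', hb', valOJZJ_zero, valOJZJ_top hn0]
      unfold weaklyDom
      dsimp only
      constructor
      · rintro ⟨h1, h2⟩; exfalso; linarith
      · intro h; exfalso; omega
    · rw [ha', hb']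
      simp [weaklyDom, valOJZJ_top hn0]
    · have hbR : (b:ℝ) + k ≤ n := by
        have h : b + k ≤ n := by omega
        exact_mod_cast h
      rw [ha', valOJZJ_top hn0, valOJZJ_mid (by omega) (by omega) hbk hbnk]
      unfold weaklyDom
      dsimp only
      constructor
      · rintro ⟨h1, h2⟩; exfalso; linarith
      · intro h; exfalso; omega
  · have haR : (k:ℝ) ≤ a := by exact_mod_cast hak
    have hanR : (a:ℝ) + k ≤ n := by
      have h : a + k ≤ n := by omega
      exact_mod_cast h
    rcases mem_GFeas.mp hb with hb' | hb' | ⟨hbk, hbnk⟩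
    · rw [hb', valOJZJ_zero, valOJZJ_mid (by omega) (by omega) hak hank]
      unfold weaklyDom
      dsimp only
      constructor
      · rintro ⟨h1, h2⟩; exfalso; linarith
      · intro h; exfalso; omega
    · rw [hb', valOJZJ_top hn0, valOJZJ_mid (by omega) (by omega) hak hank]
      unfold weaklyDom
      dsimp only
      constructor
      · rintro ⟨h1, h2⟩; exfalso; linarith
      · intro h; exfalso; omega
    · rw [valOJZJ_mid (by omega) (by omega) hak hank,
        valOJZJ_mid (by omega) (by omega) hbk hbnk]
      unfold weaklyDom
      dsimp only
      constructor
      · rintro ⟨h1, h2⟩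
        have hab : (a:ℝ) ≤ b := by linarith
        have hba : (b:ℝ) ≤ a := by linarith
        exact_mod_cast le_antisymm hab hba
      · rintro rfl
        exact ⟨le_refl _, le_refl _⟩

lemma gap_cases (hk2 : 2 ≤ k) (hk4 : 4 * k ≤ n) {b : ℕ} (hbn : b ≤ n)
    (hb : b ∉ GFeas n k) : (0 < b ∧ b < k) ∨ (n - k < b ∧ b < n) := by
  have h1 : b ≠ 0 := fun h => hb (mem_GFeas.mpr (Or.inl h))
  have h2 : b ≠ n := fun h => hb (mem_GFeas.mpr (Or.inr (Or.inl h)))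
  have h3 : ¬ (k ≤ b ∧ b ≤ n - k) := fun h => hb (mem_GFeas.mpr (Or.inr (Or.inr h)))
  omega

lemma hval2_ojzj (hk2 : 2 ≤ k) (hk4 : 4 * k ≤ n) :
    ∀ b ≤ n, b ∉ GFeas n k → ∀ a ∈ GFeas n k,
      ¬ weaklyDom (valOJZJ n k b) (valOJZJ n k a) := by
  have hn0 : n ≠ 0 := by omega
  have hnR : (0:ℝ) < n := by exact_mod_cast Nat.pos_of_ne_zero hn0
  have hkR : (2:ℝ) ≤ k := by exact_mod_cast hk2
  have hknR : 4 * (k:ℝ) ≤ n := by exact_mod_cast hk4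
  intro b hbn hb a ha
  rcases gap_cases hk2 hk4 hbn hb with ⟨hb0, hbk⟩ | ⟨hb1, hb2⟩
  · have hbR : (b:ℝ) < k := by exact_mod_cast hbk
    have hbnR : (b:ℝ) ≤ n := by exact_mod_cast hbn
    rw [valOJZJ_low hb0 hbk (by omega)]
    rcases mem_GFeas.mp ha with ha' | ha' | ⟨hak, hank⟩
    · rw [ha', valOJZJ_zero]
      rintro ⟨-, h2⟩
      dsimp only at h2
      linarith
    · rw [ha', valOJZJ_top hn0]
      rintro ⟨h1, -⟩
      dsimp only at h1
      linarith
    · have haR : (k:ℝ) ≤ a := by exact_mod_cast hak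
      rw [valOJZJ_mid (by omega) (by omega) hak hank]
      rintro ⟨h1, -⟩
      dsimp only at h1
      linarith
  · have hbR : (n:ℝ) < k + b := by
      have h : n < k + b := by omega
      exact_mod_cast h
    have hb2R : (b:ℝ) < n := by exact_mod_cast hb2
    rw [valOJZJ_high (by omega) (by omega) hb1 hb2]
    rcases mem_GFeas.mp ha with ha' | ha' | ⟨hak, hank⟩
    · rw [ha', valOJZJ_zero]
      rintro ⟨h1, -⟩
      dsimp only at h1
      linarith
    · rw [ha', valOJZJ_top hn0]
      rintro ⟨h1, -⟩
      dsimp only at h1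
      linarith
    · have haR : (k:ℝ) ≤ a := by exact_mod_cast hak
      rw [valOJZJ_mid (by omega) (by omega) hak hank]
      rintro ⟨h1, -⟩
      dsimp only at h1
      linarith

lemma hval3_ojzj (hk2 : 2 ≤ k) (hk4 : 4 * k ≤ n) :
    ∀ b ≤ n, b ∉ GFeas n k → ∀ a ∈ Finset.Icc k (n - k),
      strictlyDom (valOJZJ n k a) (valOJZJ n k b) := by
  have hn0 : n ≠ 0 := by omega
  have hnR : (0:ℝ) < n := by exact_mod_cast Nat.pos_of_ne_zero hn0
  have hkR : (2:ℝ) ≤ k := by exact_mod_cast hk2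
  have hknR : 4 * (k:ℝ) ≤ n := by exact_mod_cast hk4
  intro b hbn hb a haI
  obtain ⟨hak, hank⟩ := Finset.mem_Icc.mp haI
  have haR : (k:ℝ) ≤ a := by exact_mod_cast hak
  have hanR : (a:ℝ) + k ≤ n := by
    have h : a + k ≤ n := by omega
    exact_mod_cast h
  rw [valOJZJ_mid (by omega) (by omega) hak hank]
  rcases gap_cases hk2 hk4 hbn hb with ⟨hb0, hbk⟩ | ⟨hb1, hb2⟩
  · have hbR : (b:ℝ) < k := by exact_mod_cast hbk
    rw [valOJZJ_low hb0 hbk (by omega)]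
    refine ⟨⟨?_, ?_⟩, ?_⟩
    · dsimp only; linarith
    · dsimp only; linarith
    · intro h
      rw [Prod.mk.injEq] at h
      have h1 := h.1
      linarith
  · have hbR : (n:ℝ) < k + b := by
      have h : n < k + b := by omega
      exact_mod_cast h
    have hbaR : (a:ℝ) < b := by
      have h : a < b := by omega
      exact_mod_cast h
    rw [valOJZJ_high (by omega) (by omega) hb1 hb2]
    refine ⟨⟨?_, ?_⟩, ?_⟩
    · dsimp only; linarith
    · dsimp only; linarith
    · intro h
      rw [Prod.mk.injEq] at h
      have h2 := h.2
      linarith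

end OJZJDom
section MasterFinal

lemma numeric_bound {n : ℕ} (hn : 16 ≤ n) :
    2 ^ (n - 1) * ((1:ℝ≥0∞) - (64 * (n:ℝ≥0∞))⁻¹ / 2) ^ (512 * n^2) ≤
      ENNReal.ofReal (Real.exp (-(1 * Real.sqrt n))) := by
  have hnR : (0:ℝ) < n := by exact_mod_cast (by omega : 0 < n)
  have hn16R : (16:ℝ) ≤ n := by exact_mod_cast hn
  have hq : (1 : ℝ≥0∞) - (64 * (n:ℝ≥0∞))⁻¹ / 2 = 1 - ((128 * n : ℕ) : ℝ≥0∞)⁻¹ := by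
    congr 1
    rw [div_eq_mul_inv, ← ENNReal.mul_inv (Or.inr ENNReal.ofNat_ne_top) (Or.inr two_ne_zero)]
    congr 1
    push_cast
    ring
  rw [hq]
  have hm0 : (0:ℝ) < ((128 * n : ℕ) : ℝ) := by
    exact_mod_cast (by omega : 0 < 128 * n)
  have e1 : ((128 * n : ℕ) : ℝ≥0∞)⁻¹ = ENNReal.ofReal (((128 * n : ℕ) : ℝ))⁻¹ := by
    rw [← ENNReal.ofReal_natCast (128 * n), ← ENNReal.ofReal_inv_of_pos hm0]
  have e2 : (1:ℝ≥0∞) - ENNReal.ofReal (((128 * n : ℕ) : ℝ))⁻¹ =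
      ENNReal.ofReal (1 - (((128 * n : ℕ) : ℝ))⁻¹) := by
    rw [← ENNReal.ofReal_one, ← ENNReal.ofReal_sub _ (by positivity)]
  have e3 : (1:ℝ) - (((128 * n : ℕ) : ℝ))⁻¹ ≤ Real.exp (-(((128 * n : ℕ) : ℝ))⁻¹) := by
    have := Real.add_one_le_exp (-(((128 * n : ℕ) : ℝ))⁻¹)
    linarith
  have hstep : (1:ℝ≥0∞) - ((128 * n : ℕ) : ℝ≥0∞)⁻¹ ≤
      ENNReal.ofReal (Real.exp (-(((128 * n : ℕ) : ℝ))⁻¹)) := by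
    rw [e1, e2]
    exact ENNReal.ofReal_le_ofReal e3
  have h2e : (2:ℝ≥0∞) ^ (n - 1) ≤ ENNReal.ofReal (Real.exp n) := by
    calc (2:ℝ≥0∞) ^ (n - 1) ≤ 2 ^ n :=
          pow_le_pow_right₀ (by norm_num) (by omega)
      _ = ENNReal.ofReal ((2:ℝ) ^ n) := by
          rw [ENNReal.ofReal_pow (by norm_num)]
          norm_num
      _ ≤ ENNReal.ofReal (Real.exp n) := by
          refine ENNReal.ofReal_le_ofReal ?_
          calc (2:ℝ) ^ n ≤ Real.exp 1 ^ n := by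
                refine pow_le_pow_left₀ (by norm_num) ?_ n
                have := Real.add_one_le_exp (1:ℝ)
                linarith
            _ = Real.exp n := by rw [← Real.exp_nat_mul, mul_one]
  calc (2:ℝ≥0∞) ^ (n - 1) * ((1:ℝ≥0∞) - ((128 * n : ℕ) : ℝ≥0∞)⁻¹) ^ (512 * n^2)
      ≤ ENNReal.ofReal (Real.exp n) *
        ENNReal.ofReal (Real.exp (-(((128 * n : ℕ) : ℝ))⁻¹)) ^ (512 * n^2) :=
        mul_le_mul' h2e (pow_le_pow_left₀ zero_le hstep _)
    _ = ENNReal.ofReal (Real.exp n * Real.exp (-(((128 * n : ℕ) : ℝ))⁻¹) ^ (512 * n^2)) := by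
        rw [← ENNReal.ofReal_pow (Real.exp_nonneg _), ← ENNReal.ofReal_mul (Real.exp_nonneg _)]

    _ ≤ ENNReal.ofReal (Real.exp (-(1 * Real.sqrt n))) := by
        refine ENNReal.ofReal_le_ofReal ?_
        rw [← Real.exp_nat_mul, ← Real.exp_add]
        refine Real.exp_le_exp.mpr ?_
        have hTa : ((512 * n^2 : ℕ) : ℝ) * (-(((128 * n : ℕ) : ℝ))⁻¹) = -(4 * n) := by
          push_cast
          field_simp
          ring
        rw [hTa]
        have hsqrt : Real.sqrt n ≤ (n:ℝ) := by
          calc Real.sqrt n ≤ Real.sqrt ((n:ℝ)^2) := Real.sqrt_le_sqrt (by nlinarith)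
            _ = (n:ℝ) := Real.sqrt_sq (by positivity)
        linarith

lemma master {n k : ℕ} (hn : 16 ≤ n) (hk : 4 * k ≤ n) (val : ℕ → ℝ × ℝ)
    (f : Individual n → ℝ × ℝ) (hf : ∀ x, f x = val (ones x))
    (hval1 : ∀ a ∈ GFeas n k, ∀ b ∈ GFeas n k, (weaklyDom (val b) (val a) ↔ a = b))
    (hval2 : ∀ b ≤ n, b ∉ GFeas n k → ∀ a ∈ GFeas n k, ¬ weaklyDom (val b) (val a))
    (hval3 : ∀ b ≤ n, b ∉ GFeas n k → ∀ a ∈ Finset.Icc k (n - k), strictlyDom (val a) (val b))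
    (mutOp : Individual n → PMF (Individual n))
    (hmut : mutOp = oneBitMut ∨ mutOp = stdBitMut)
    (x₀ : Individual n) (hx₀ : ones x₀ ∈ Finset.Icc k (n - k)) :
    1 - ENNReal.ofReal (Real.exp (-(1 * Real.sqrt n))) ≤
      prob (run (modStep f mutOp ones n) {x₀} ⌊(512:ℝ) * (n : ℝ) ^ 2⌋₊)
        {l | ∃ Q ∈ l, (n : ℝ) / 2 ≤ (Q.card : ℝ)} := by
  have hkn : k ≤ n := by omega
  have hInv0 : GInv n k {x₀} := by
    refine ⟨?_, ?_, ?_⟩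
    · intro x hx y hy _
      rw [Finset.mem_singleton] at hx hy
      rw [hx, hy]
    · intro x hx
      rw [Finset.mem_singleton] at hx
      subst hx
      exact mem_GFeas.mpr (Or.inr (Or.inr (Finset.mem_Icc.mp hx₀)))
    · exact ⟨x₀, Finset.mem_singleton_self _, hx₀⟩
  have hmain := run_main_bound (modStep f mutOp ones n) (GInv n k)
      (fun Q => (n:ℝ)/2 ≤ (Q.card : ℝ)) n Finset.card (64 * (n:ℝ≥0∞))⁻¹
      (fun s hs => modStep_support hkn val f hf hval1 hval2 hval3 mutOp s hs)
      (fun s hs hgood => by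
        have hcardR : (s.card : ℝ) < (n:ℝ)/2 := lt_of_not_ge hgood
        have hcard : 2 * s.card < n := by
          have h2 : ((2 * s.card : ℕ) : ℝ) < n := by push_cast; linarith
          exact_mod_cast h2
        exact modStep_growth hn hk val f hf hval1 hval2 hval3 mutOp hmut s hs hcard)
      (fun s hs hR => by
        have h1 : (n : ℝ) ≤ s.card := by exact_mod_cast hR
        have h2 : (0:ℝ) ≤ n := Nat.cast_nonneg n
        show (n:ℝ)/2 ≤ (s.card : ℝ)
        linarith)
      ⌊(512:ℝ) * (n : ℝ) ^ 2⌋₊ {x₀} hInv0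
  refine le_trans (tsub_le_tsub_left ?_ 1) hmain
  have hT : ⌊(512:ℝ) * (n : ℝ) ^ 2⌋₊ = 512 * n ^ 2 := by
    rw [show (512:ℝ) * (n:ℝ)^2 = ((512 * n^2 : ℕ) : ℝ) by push_cast; ring,
      Nat.floor_natCast]
  rw [hT, Finset.card_singleton]
  exact numeric_bound hn

end MasterFinal
/-- There exist `C, c > 0` such that for all sufficiently large `n`, the
modified SEMO and modified GSEMO reach a population of at least `n/2` individuals within at
most `C·n²` iterations, with probability at least `1 − exp(−c√n)`: (i) maximizing OMM, from
every initial individual; (ii) maximizing `OJZJ_k` for any integer `1 < k ≤ n/4`, from every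
Pareto-optimal initial individual distinct from `0ⁿ` and `1ⁿ`. -/
theorem modified_gsemo_population_growth_omm_ojzj :
    ∃ C c : ℝ, 0 < C ∧ 0 < c ∧ ∃ N₀ : ℕ, ∀ n : ℕ, N₀ ≤ n →
      (∀ mutOp : Individual n → PMF (Individual n),
        (mutOp = oneBitMut ∨ mutOp = stdBitMut) →
        ∀ x₀ : Individual n,
          1 - ENNReal.ofReal (Real.exp (-(c * Real.sqrt n))) ≤
            prob (run (modStep omm mutOp ones n) {x₀} ⌊C * (n : ℝ) ^ 2⌋₊)
              {l | ∃ Q ∈ l, (n : ℝ) / 2 ≤ (Q.card : ℝ)}) ∧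
      (∀ k : ℕ, 1 < k → 4 * k ≤ n →
        ∀ mutOp : Individual n → PMF (Individual n),
          (mutOp = oneBitMut ∨ mutOp = stdBitMut) →
          ∀ x₀ : Individual n,
            (∀ y : Individual n, ¬ strictlyDom (ojzj n k y) (ojzj n k x₀)) →
            x₀ ≠ (fun _ => false) → x₀ ≠ (fun _ => true) →
            1 - ENNReal.ofReal (Real.exp (-(c * Real.sqrt n))) ≤
              prob (run (modStep (ojzj n k) mutOp ones n) {x₀} ⌊C * (n : ℝ) ^ 2⌋₊)
                {l | ∃ Q ∈ l, (n : ℝ) / 2 ≤ (Q.card : ℝ)}) := by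
  refine ⟨512, 1, by norm_num, by norm_num, 16, fun n hn => ⟨?_, ?_⟩⟩
  · intro mutOp hmut x₀
    exact master hn (by omega : 4 * 0 ≤ n) (valOMM n) omm omm_eq_val hval1_omm
      hval2_omm hval3_omm mutOp hmut x₀
      (Finset.mem_Icc.mpr ⟨Nat.zero_le _, by simpa using ones_le x₀⟩)
  · intro k hk1 hk4 mutOp hmut x₀ hpareto hne0 hne1
    have hk2 : 2 ≤ k := hk1
    have hon := ones_le x₀
    have hcases : ones x₀ ∈ Finset.Icc k (n - k) := by
      rw [Finset.mem_Icc]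
      by_contra hcon
      have h0 : ones x₀ ≠ 0 := fun h => hne0 (eq_allFalse_of_ones x₀ h)
      have h1 : ones x₀ ≠ n := fun h => hne1 (eq_allTrue_of_ones x₀ h)
      have hgap : (0 < ones x₀ ∧ ones x₀ < k) ∨ (n - k < ones x₀ ∧ ones x₀ < n) := by
        omega
      rcases hgap with ⟨hg1, hg2⟩ | ⟨hg1, hg2⟩
      · apply hpareto (fun _ => true)
        rw [ojzj_eq_val hk2 hk4, ojzj_eq_val hk2 hk4, ones_allTrue,
          valOJZJ_top (by omega), valOJZJ_low hg1 hg2 (by omega)]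
        have hoR : (ones x₀ : ℝ) < k := by exact_mod_cast hg2
        have hknR : (k:ℝ) ≤ n := by exact_mod_cast (by omega : k ≤ n)
        refine ⟨⟨?_, ?_⟩, ?_⟩
        · dsimp only; linarith
        · dsimp only; linarith
        · intro h
          rw [Prod.mk.injEq] at h
          have h2 := h.2
          linarith
      · apply hpareto (fun _ => false)
        rw [ojzj_eq_val hk2 hk4, ojzj_eq_val hk2 hk4, ones_allFalse,
          valOJZJ_zero, valOJZJ_high (by omega) (by omega) hg1 hg2]
        have hg1R : (n:ℝ) < k + ones x₀ := by
          exact_mod_cast (by omega : n < k + ones x₀)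
        have hoR : (0:ℝ) < ones x₀ := by exact_mod_cast (by omega : 0 < ones x₀)
        have honR : (ones x₀ : ℝ) ≤ n := by exact_mod_cast hon
        refine ⟨⟨?_, ?_⟩, ?_⟩
        · dsimp only; linarith
        · dsimp only; linarith
        · intro h
          rw [Prod.mk.injEq] at h
          have h1' := h.1
          linarith
    exact master hn hk4 (valOJZJ n k) (ojzj n k) (ojzj_eq_val hk2 hk4)
      (hval1_ojzj hk2 hk4) (hval2_ojzj hk2 hk4) (hval3_ojzj hk2 hk4) mutOp hmut x₀ hcases

end GSEMOPaper
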